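/- Let a₁ = (1/P([0,1/2])) ∫_{[0,1/2]} x dP(x) and a₂ = (1/P([1/2,1])) ∫_{[1/2,1]} x dP(x) be the conditional expectations over the left and right halves of [0,1]. Then a₁ = 3/14, a₂ = 11/14, the distortion error of γ = {3/14, 11/14} is V(P; γ) = 13/441, and V(P; γ) > V_2; hence γ does not form an optimal set of two-means for P. -/

import Mathlib

open MeasureTheory Filter
open scoped ENNReal

noncomputable section

/-- The three contractive similarities `S j x = x/5 + 2 j/5` (indexing `j = 0,1,2`
corresponds to the paper's `j = 1,2,3`). -/
def S (j : Fin 3) : ℝ → ℝ := fun x => x / 5 + 2 * (j : ℝ) / 5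

/-- For a word `σ ∈ {1,2,3}^k`, the composition `S_σ = S_{σ 0} ∘ ⋯ ∘ S_{σ (k-1)}`. -/
def Sword {k : ℕ} (σ : Fin k → Fin 3) : ℝ → ℝ :=
  (List.ofFn fun i => S (σ i)).foldr (· ∘ ·) id

/-- The basic interval `J j = S j ([0,1])`. -/
def J (j : Fin 3) : Set ℝ := S j '' Set.Icc 0 1

/-- The interval `J_σ = S_σ([0,1])`. -/
def Jword {k : ℕ} (σ : Fin k → Fin 3) : Set ℝ := Sword σ '' Set.Icc 0 1

/-- The distortion error `V(P; α) = ∫ min_{a ∈ α} (x - a)^2 dP(x)`. -/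
def distortion (P : Measure ℝ) (α : Set ℝ) : ℝ :=
  ∫ x, (⨅ a : α, (x - (a : ℝ)) ^ 2) ∂P

/-- The `n`-th quantization error
`V_n = inf { V(P; α) : α ⊂ ℝ finite, 1 ≤ card α ≤ n }`. -/
def quantErr (P : Measure ℝ) (n : ℕ) : ℝ :=
  sInf {e | ∃ α : Set ℝ, α.Finite ∧ α.Nonempty ∧ α.ncard ≤ n ∧ distortion P α = e}

/-- The self-similarity equation `P = (1/3)(P∘S₁⁻¹ + P∘S₂⁻¹ + P∘S₃⁻¹)`
characterizing the standard triadic Cantor distribution. -/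
def IsTriadicCantor (P : Measure ℝ) : Prop :=
  P = (3 : ℝ≥0∞)⁻¹ • (P.map (S 0) + P.map (S 1) + P.map (S 2))

lemma S_meas (j : Fin 3) : Measurable (S j) := by unfold S; fun_prop

lemma S0_apply (x : ℝ) : S 0 x = x / 5 := by simp [S]
lemma S1_apply (x : ℝ) : S 1 x = x / 5 + 2/5 := by norm_num [S]
lemma S2_apply (x : ℝ) : S 2 x = x / 5 + 4/5 := by norm_num [S]

def ind (a b : ℝ) (k : ℕ) : ℝ → ℝ := fun x => (Set.Icc a b).indicator (fun y => y ^ k) x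

lemma ind_meas (a b : ℝ) (k : ℕ) : Measurable (ind a b k) :=
  (measurable_id.pow_const k).indicator measurableSet_Icc

lemma ind_bd {a b : ℝ} (ha : 0 ≤ a) (hb : b ≤ 1) (k : ℕ) (x : ℝ) : |ind a b k x| ≤ 1 := by
  unfold ind
  by_cases hx : x ∈ Set.Icc a b
  · rw [Set.indicator_of_mem hx]
    obtain ⟨h1, h2⟩ := hx
    rw [abs_of_nonneg (pow_nonneg (le_trans ha h1) k)]
    exact pow_le_one₀ (le_trans ha h1) (le_trans h2 hb)
  · rw [Set.indicator_of_notMem hx]; norm_num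

lemma ind_int {P : Measure ℝ} [IsFiniteMeasure P] {a b : ℝ} (ha : 0 ≤ a) (hb : b ≤ 1) (k : ℕ) :
    Integrable (ind a b k) P :=
  Integrable.mono' (integrable_const 1) (ind_meas a b k).aestronglyMeasurable
    (Filter.Eventually.of_forall (ind_bd ha hb k))

def comb (c₂ c₁ c₀ a b : ℝ) : ℝ → ℝ :=
  fun x => c₂ * ind a b 2 x + c₁ * ind a b 1 x + c₀ * ind a b 0 x

lemma comb_int {P : Measure ℝ} [IsFiniteMeasure P] {a b : ℝ} (ha : 0 ≤ a) (hb : b ≤ 1)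
    (c₂ c₁ c₀ : ℝ) : Integrable (comb c₂ c₁ c₀ a b) P :=
  (((ind_int ha hb 2).const_mul c₂).add ((ind_int ha hb 1).const_mul c₁)).add
    ((ind_int ha hb 0).const_mul c₀)

lemma comb_integral {P : Measure ℝ} [IsFiniteMeasure P] {a b : ℝ} (ha : 0 ≤ a) (hb : b ≤ 1)
    (c₂ c₁ c₀ : ℝ) :
    ∫ x, comb c₂ c₁ c₀ a b x ∂P =
      c₂ * ∫ x, ind a b 2 x ∂P + c₁ * ∫ x, ind a b 1 x ∂P + c₀ * ∫ x, ind a b 0 x ∂P := by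
  unfold comb
  have h2 : Integrable (fun x => c₂ * ind a b 2 x) P := (ind_int ha hb 2).const_mul c₂
  have h1 : Integrable (fun x => c₁ * ind a b 1 x) P := (ind_int ha hb 1).const_mul c₁
  have h0 : Integrable (fun x => c₀ * ind a b 0 x) P := (ind_int ha hb 0).const_mul c₀
  have h21 : Integrable (fun x => c₂ * ind a b 2 x + c₁ * ind a b 1 x) P := h2.add h1
  rw [integral_add h21 h0, integral_add h2 h1, integral_const_mul, integral_const_mul, integral_const_mul]

lemma measure_eq {P : Measure ℝ} (hP : IsTriadicCantor P) {A : Set ℝ} (hA : MeasurableSet A) :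
    P A = 3⁻¹ * (P (S 0 ⁻¹' A) + P (S 1 ⁻¹' A) + P (S 2 ⁻¹' A)) := by
  conv_lhs => rw [hP]
  simp [Measure.add_apply, Measure.map_apply (S_meas _) hA, smul_eq_mul, mul_add]

lemma key {P : Measure ℝ} [IsProbabilityMeasure P] (hP : IsTriadicCantor P)
    (hsupp : ∀ᵐ x ∂P, x ∈ Set.Icc (0:ℝ) 1)
    (f g0 g1 g2 : ℝ → ℝ) (hf : Measurable f) (hfb : ∀ x, |f x| ≤ 1)
    (h0 : ∀ x ∈ Set.Icc (0:ℝ) 1, f (S 0 x) = g0 x)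
    (h1 : ∀ x ∈ Set.Icc (0:ℝ) 1, f (S 1 x) = g1 x)
    (h2 : ∀ x ∈ Set.Icc (0:ℝ) 1, f (S 2 x) = g2 x) :
    ∫ x, f x ∂P = 3⁻¹ * ((∫ x, g0 x ∂P) + (∫ x, g1 x ∂P) + (∫ x, g2 x ∂P)) := by
  haveI i0 : IsProbabilityMeasure (P.map (S 0)) := Measure.isProbabilityMeasure_map (S_meas 0).aemeasurable
  haveI i1 : IsProbabilityMeasure (P.map (S 1)) := Measure.isProbabilityMeasure_map (S_meas 1).aemeasurable
  haveI i2 : IsProbabilityMeasure (P.map (S 2)) := Measure.isProbabilityMeasure_map (S_meas 2).aemeasurable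
  have hint : ∀ j : Fin 3, Integrable f (P.map (S j)) := fun j =>
    Integrable.mono' (integrable_const 1) hf.aestronglyMeasurable
      (Filter.Eventually.of_forall hfb)
  have hmap : ∀ j : Fin 3, ∫ x, f x ∂(P.map (S j)) = ∫ x, f (S j x) ∂P := fun j =>
    integral_map (S_meas j).aemeasurable hf.aestronglyMeasurable
  have step1 : ∫ x, f x ∂P
      = 3⁻¹ * ((∫ x, f (S 0 x) ∂P) + (∫ x, f (S 1 x) ∂P) + (∫ x, f (S 2 x) ∂P)) := by
    conv_lhs => rw [hP]
    rw [integral_smul_measure, integral_add_measure ((hint 0).add_measure (hint 1)) (hint 2),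
      integral_add_measure (hint 0) (hint 1), hmap 0, hmap 1, hmap 2]
    norm_num [smul_eq_mul]
  rw [step1]
  congr 1
  have e0 : ∫ x, f (S 0 x) ∂P = ∫ x, g0 x ∂P :=
    integral_congr_ae (hsupp.mono fun x hx => h0 x hx)
  have e1 : ∫ x, f (S 1 x) ∂P = ∫ x, g1 x ∂P :=
    integral_congr_ae (hsupp.mono fun x hx => h1 x hx)
  have e2 : ∫ x, f (S 2 x) ∂P = ∫ x, g2 x ∂P :=
    integral_congr_ae (hsupp.mono fun x hx => h2 x hx)
  rw [e0, e1, e2]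

lemma S_preimage_Iio (j : Fin 3) (t : ℝ) : S j ⁻¹' Set.Iio t = Set.Iio (5*t - 2*(j:ℝ)) := by
  ext x
  simp only [Set.mem_preimage, Set.mem_Iio, S]
  constructor <;> intro h <;> linarith

lemma S_preimage_Ioi (j : Fin 3) (t : ℝ) : S j ⁻¹' Set.Ioi t = Set.Ioi (5*t - 2*(j:ℝ)) := by
  ext x
  simp only [Set.mem_preimage, Set.mem_Ioi, S]
  constructor <;> intro h <;> linarith

lemma third_cancel {P : Measure ℝ} [IsProbabilityMeasure P] {A : Set ℝ}
    (h : P A = 3⁻¹ * P A) : P A = 0 := by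
  have hfin : P A ≠ ∞ := (measure_lt_top P A).ne
  have := congrArg ENNReal.toReal h
  rw [ENNReal.toReal_mul] at this
  have h3 : ((3:ℝ≥0∞)⁻¹).toReal = 3⁻¹ := by simp
  rw [h3] at this
  have : (P A).toReal = 0 := by linarith
  rwa [ENNReal.toReal_eq_zero_iff, or_iff_left hfin] at this

lemma iInter_empty_of_tendsto_bot {t : ℝ} (ht : t < 0) :
    (⋂ n : ℕ, Set.Iio ((5:ℝ)^n * t)) = ∅ := by
  ext x
  simp only [Set.mem_iInter, Set.mem_Iio, Set.mem_empty_iff_false, iff_false, not_forall, not_lt]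
  obtain ⟨n, hn⟩ := exists_nat_gt (x / t)
  refine ⟨n, ?_⟩
  have hpow : (n:ℝ) ≤ 5^n := by
    calc (n:ℝ) ≤ 2^n := by exact_mod_cast Nat.le_of_lt (Nat.lt_two_pow_self (n := n))
    _ ≤ 5^n := by gcongr; norm_num
  have : (5:ℝ)^n * t ≤ n * t := by nlinarith
  have hx : (n:ℝ) * t < x := by
    have := (div_lt_iff_of_neg ht).mp hn
    linarith
  linarith

lemma Iio_neg_zero {P : Measure ℝ} [IsProbabilityMeasure P] (hP : IsTriadicCantor P) :
    ∀ t : ℝ, t < 0 → P (Set.Iio t) = 0 := by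
  have hstep : ∀ u : ℝ, P (Set.Iio u) ≤ P (Set.Iio (5*u)) := by
    intro u
    rw [measure_eq hP measurableSet_Iio, S_preimage_Iio, S_preimage_Iio, S_preimage_Iio]
    have hmono : ∀ j : Fin 3, P (Set.Iio (5*u - 2*(j:ℝ))) ≤ P (Set.Iio (5*u)) := fun j =>
      measure_mono (Set.Iio_subset_Iio (by
        have : (0:ℝ) ≤ (j:ℝ) := Nat.cast_nonneg _
        linarith))
    calc 3⁻¹ * (P (Set.Iio (5*u - 2*((0:Fin 3):ℝ))) + P (Set.Iio (5*u - 2*((1:Fin 3):ℝ)))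
          + P (Set.Iio (5*u - 2*((2:Fin 3):ℝ))))
        ≤ 3⁻¹ * (P (Set.Iio (5*u)) + P (Set.Iio (5*u)) + P (Set.Iio (5*u))) := by
          gcongr <;> norm_num
      _ = 3⁻¹ * (3 * P (Set.Iio (5*u))) := by ring_nf
      _ = P (Set.Iio (5*u)) := by
          rw [← mul_assoc, ENNReal.inv_mul_cancel (by norm_num) (by norm_num), one_mul]
  intro t ht
  have hiter : ∀ n : ℕ, P (Set.Iio t) ≤ P (Set.Iio ((5:ℝ)^n * t)) := by
    intro n
    induction n with
    | zero => simp
    | succ n ih =>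
        refine ih.trans ?_
        have := hstep ((5:ℝ)^n * t)
        have he : 5 * ((5:ℝ)^n * t) = (5:ℝ)^(n+1) * t := by ring
        rwa [he] at this
  have hanti : Antitone (fun n : ℕ => Set.Iio ((5:ℝ)^n * t)) := by
    intro a b hab
    apply Set.Iio_subset_Iio
    have h1 : (5:ℝ)^a ≤ 5^b := by gcongr <;> norm_num
    nlinarith
  have hlim : Tendsto (fun n : ℕ => P (Set.Iio ((5:ℝ)^n * t))) atTop
      (nhds (P (⋂ n : ℕ, Set.Iio ((5:ℝ)^n * t)))) := by
    apply tendsto_measure_iInter_atTop (fun n => (measurableSet_Iio).nullMeasurableSet) hanti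
    exact ⟨0, (measure_lt_top P _).ne⟩
  rw [iInter_empty_of_tendsto_bot ht, measure_empty] at hlim
  have := ge_of_tendsto' hlim hiter
  exact le_antisymm (by simpa using this) zero_le

lemma Iio_zero {P : Measure ℝ} [IsProbabilityMeasure P] (hP : IsTriadicCantor P) :
    P (Set.Iio 0) = 0 := by
  have h := measure_eq hP (A := Set.Iio 0) measurableSet_Iio
  rw [S_preimage_Iio, S_preimage_Iio, S_preimage_Iio] at h
  have e0 : 5*(0:ℝ) - 2*((0:Fin 3):ℝ) = 0 := by norm_num
  have e1 : P (Set.Iio (5*(0:ℝ) - 2*((1:Fin 3):ℝ))) = 0 := by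
    apply Iio_neg_zero hP; norm_num
  have e2 : P (Set.Iio (5*(0:ℝ) - 2*((2:Fin 3):ℝ))) = 0 := by
    apply Iio_neg_zero hP; norm_num
  rw [e0, e1, e2, add_zero, add_zero] at h
  exact third_cancel h

lemma iInter_Ioi_empty {t : ℝ} (ht : 1 < t) :
    (⋂ n : ℕ, Set.Ioi ((5:ℝ)^n * (t-1) + 1)) = ∅ := by
  ext x
  simp only [Set.mem_iInter, Set.mem_Ioi, Set.mem_empty_iff_false, iff_false, not_forall, not_lt]
  obtain ⟨n, hn⟩ := exists_nat_gt ((x - 1) / (t - 1))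
  refine ⟨n, ?_⟩
  have hpow : (n:ℝ) ≤ 5^n := by
    calc (n:ℝ) ≤ 2^n := by exact_mod_cast Nat.le_of_lt (Nat.lt_two_pow_self (n := n))
    _ ≤ 5^n := by gcongr; norm_num
  have ht1 : (0:ℝ) < t - 1 := by linarith
  have hx : x - 1 < n * (t - 1) := by
    have := (div_lt_iff₀ ht1).mp hn
    linarith
  nlinarith

lemma Ioi_gt_one_zero {P : Measure ℝ} [IsProbabilityMeasure P] (hP : IsTriadicCantor P) :
    ∀ t : ℝ, 1 < t → P (Set.Ioi t) = 0 := by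
  have hstep : ∀ u : ℝ, P (Set.Ioi u) ≤ P (Set.Ioi (5*u - 4)) := by
    intro u
    rw [measure_eq hP measurableSet_Ioi, S_preimage_Ioi, S_preimage_Ioi, S_preimage_Ioi]
    calc 3⁻¹ * (P (Set.Ioi (5*u - 2*((0:Fin 3):ℝ))) + P (Set.Ioi (5*u - 2*((1:Fin 3):ℝ)))
          + P (Set.Ioi (5*u - 2*((2:Fin 3):ℝ))))
        ≤ 3⁻¹ * (P (Set.Ioi (5*u - 4)) + P (Set.Ioi (5*u - 4)) + P (Set.Ioi (5*u - 4))) := by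
          gcongr <;> norm_num
      _ = 3⁻¹ * (3 * P (Set.Ioi (5*u - 4))) := by ring_nf
      _ = P (Set.Ioi (5*u - 4)) := by
          rw [← mul_assoc, ENNReal.inv_mul_cancel (by norm_num) (by norm_num), one_mul]
  intro t ht
  have hiter : ∀ n : ℕ, P (Set.Ioi t) ≤ P (Set.Ioi ((5:ℝ)^n * (t-1) + 1)) := by
    intro n
    induction n with
    | zero => simp
    | succ n ih =>
        refine ih.trans ?_
        have := hstep ((5:ℝ)^n * (t-1) + 1)
        have he : 5 * ((5:ℝ)^n * (t-1) + 1) - 4 = (5:ℝ)^(n+1) * (t-1) + 1 := by ring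
        rwa [he] at this
  have hanti : Antitone (fun n : ℕ => Set.Ioi ((5:ℝ)^n * (t-1) + 1)) := by
    intro a b hab
    apply Set.Ioi_subset_Ioi
    have h1 : (5:ℝ)^a ≤ 5^b := by gcongr <;> norm_num
    nlinarith
  have hlim : Tendsto (fun n : ℕ => P (Set.Ioi ((5:ℝ)^n * (t-1) + 1))) atTop
      (nhds (P (⋂ n : ℕ, Set.Ioi ((5:ℝ)^n * (t-1) + 1)))) := by
    apply tendsto_measure_iInter_atTop (fun n => (measurableSet_Ioi).nullMeasurableSet) hanti
    exact ⟨0, (measure_lt_top P _).ne⟩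
  rw [iInter_Ioi_empty ht, measure_empty] at hlim
  have := ge_of_tendsto' hlim hiter
  exact le_antisymm (by simpa using this) zero_le

lemma Ioi_one {P : Measure ℝ} [IsProbabilityMeasure P] (hP : IsTriadicCantor P) :
    P (Set.Ioi 1) = 0 := by
  have h := measure_eq hP (A := Set.Ioi 1) measurableSet_Ioi
  rw [S_preimage_Ioi, S_preimage_Ioi, S_preimage_Ioi] at h
  have e2 : 5*(1:ℝ) - 2*((2:Fin 3):ℝ) = 1 := by norm_num
  have e0 : P (Set.Ioi (5*(1:ℝ) - 2*((0:Fin 3):ℝ))) = 0 := by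
    apply Ioi_gt_one_zero hP; norm_num
  have e1 : P (Set.Ioi (5*(1:ℝ) - 2*((1:Fin 3):ℝ))) = 0 := by
    apply Ioi_gt_one_zero hP; norm_num
  rw [e0, e1, e2, zero_add, zero_add] at h
  exact third_cancel h

lemma supp_ae {P : Measure ℝ} [IsProbabilityMeasure P] (hP : IsTriadicCantor P) :
    ∀ᵐ x ∂P, x ∈ Set.Icc (0:ℝ) 1 := by
  have hc : P (Set.Icc (0:ℝ) 1)ᶜ = 0 := by
    refine le_antisymm ?_ zero_le
    calc P (Set.Icc (0:ℝ) 1)ᶜ ≤ P (Set.Iio 0 ∪ Set.Ioi 1) := by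
          apply measure_mono
          intro x hx
          simp only [Set.mem_compl_iff, Set.mem_Icc, not_and_or, not_le] at hx
          simpa using hx
      _ ≤ P (Set.Iio 0) + P (Set.Ioi 1) := measure_union_le _ _
      _ = 0 := by rw [Iio_zero hP, Ioi_one hP, add_zero]
  rw [ae_iff]
  convert hc using 2
  rfl

lemma iInf_pair_sq (c d x : ℝ) :
    (⨅ a : ({c, d} : Set ℝ), (x - (a:ℝ))^2) = min ((x-c)^2) ((x-d)^2) := by
  have h1 : (⨅ a : ({c, d} : Set ℝ), (x - (a:ℝ))^2)
      = sInf ((fun a => (x - a)^2) '' ({c, d} : Set ℝ)) := by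
    rw [Set.image_eq_range]
    rfl
  rw [h1, Set.image_pair, csInf_pair]

lemma distortion_pair_eq {P : Measure ℝ} [IsProbabilityMeasure P]
    (hsupp : ∀ᵐ x ∂P, x ∈ Set.Icc (0:ℝ) 1) {c d : ℝ} (hcd : c < d)
    (hm0 : 0 ≤ (c+d)/2) (hm1 : (c+d)/2 ≤ 1) :
    distortion P {c, d} =
      (1 * ∫ x, ind 0 ((c+d)/2) 2 x ∂P + (-(2*c)) * ∫ x, ind 0 ((c+d)/2) 1 x ∂P
        + c^2 * ∫ x, ind 0 ((c+d)/2) 0 x ∂P)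
      + (1 * ∫ x, ind 0 1 2 x ∂P + (-(2*d)) * ∫ x, ind 0 1 1 x ∂P + d^2 * ∫ x, ind 0 1 0 x ∂P)
      - (1 * ∫ x, ind 0 ((c+d)/2) 2 x ∂P + (-(2*d)) * ∫ x, ind 0 ((c+d)/2) 1 x ∂P
        + d^2 * ∫ x, ind 0 ((c+d)/2) 0 x ∂P) := by
  have hae : (fun x => (⨅ a : ({c, d} : Set ℝ), (x - (a:ℝ))^2))
      =ᵐ[P] fun x => comb 1 (-(2*c)) (c^2) 0 ((c+d)/2) x + comb 1 (-(2*d)) (d^2) 0 1 x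
        - comb 1 (-(2*d)) (d^2) 0 ((c+d)/2) x := by
    refine hsupp.mono fun x hx => ?_
    obtain ⟨hx0, hx1⟩ := hx
    dsimp only
    rw [iInf_pair_sq]
    have hmem1 : x ∈ Set.Icc (0:ℝ) 1 := ⟨hx0, hx1⟩
    by_cases hxm : x ≤ (c+d)/2
    · have hmin : min ((x-c)^2) ((x-d)^2) = (x-c)^2 := min_eq_left (by nlinarith)
      have hmem : x ∈ Set.Icc (0:ℝ) ((c+d)/2) := ⟨hx0, hxm⟩
      simp only [hmin, comb, ind, Set.indicator_of_mem hmem, Set.indicator_of_mem hmem1]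
      ring
    · have hmin : min ((x-c)^2) ((x-d)^2) = (x-d)^2 := min_eq_right (by nlinarith)
      have hmem : x ∉ Set.Icc (0:ℝ) ((c+d)/2) := by
        simp only [Set.mem_Icc, not_and_or, not_le]
        right; linarith
      simp only [hmin, comb, ind, Set.indicator_of_notMem hmem, Set.indicator_of_mem hmem1]
      ring
  have hint1 : Integrable (fun x => comb 1 (-(2*c)) (c^2) 0 ((c+d)/2) x) P :=
    comb_int le_rfl hm1 _ _ _
  have hint2 : Integrable (fun x => comb 1 (-(2*d)) (d^2) 0 1 x) P :=
    comb_int le_rfl le_rfl _ _ _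
  have hint3 : Integrable (fun x => comb 1 (-(2*d)) (d^2) 0 ((c+d)/2) x) P :=
    comb_int le_rfl hm1 _ _ _
  have h12 : Integrable (fun x => comb 1 (-(2*c)) (c^2) 0 ((c+d)/2) x
      + comb 1 (-(2*d)) (d^2) 0 1 x) P := hint1.add hint2
  rw [distortion, integral_congr_ae hae, integral_sub h12 hint3, integral_add hint1 hint2,
    comb_integral le_rfl hm1, comb_integral le_rfl le_rfl, comb_integral le_rfl hm1]

lemma ind_zero_integral {P : Measure ℝ} [IsFiniteMeasure P] (a b : ℝ) :
    ∫ x, ind a b 0 x ∂P = (P (Set.Icc a b)).toReal := by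
  have h : (fun x => ind a b 0 x) = fun x => (Set.Icc a b).indicator (fun _ => (1:ℝ)) x := by
    funext x; simp [ind]
  rw [h, integral_indicator measurableSet_Icc, setIntegral_const, smul_eq_mul, mul_one]
  rfl

lemma ind_one_integral {P : Measure ℝ} [IsFiniteMeasure P] (a b : ℝ) :
    ∫ x, ind a b 1 x ∂P = ∫ x in Set.Icc a b, x ∂P := by
  have h : (fun x => ind a b 1 x) = fun x => (Set.Icc a b).indicator (fun y => y) x := by
    funext x; simp [ind]
  rw [h, integral_indicator measurableSet_Icc]

lemma ind_comp {a b a' b' u c₂ c₁ c₀ : ℝ} {k : ℕ} (x : ℝ)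
    (hiff : x/5 + u ∈ Set.Icc a b ↔ x ∈ Set.Icc a' b')
    (hpoly : (x/5 + u)^k = c₂*x^2 + c₁*x^1 + c₀*x^0) :
    ind a b k (x/5 + u) = comb c₂ c₁ c₀ a' b' x := by
  by_cases hm : x ∈ Set.Icc a' b'
  · rw [ind, Set.indicator_of_mem (hiff.mpr hm)]
    simp only [comb, ind, Set.indicator_of_mem hm]
    exact hpoly
  · rw [ind, Set.indicator_of_notMem (fun h => hm (hiff.mp h))]
    simp only [comb, ind, Set.indicator_of_notMem hm]
    ring

lemma ind_comp_zero {a b : ℝ} (u : ℝ) (k : ℕ) (x : ℝ) (h : x/5 + u ∉ Set.Icc a b) :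
    ind a b k (x/5 + u) = comb 0 0 0 0 1 x := by
  rw [ind, Set.indicator_of_notMem h]
  simp [comb]

lemma S0_apply' (x : ℝ) : S 0 x = x / 5 + 0 := by norm_num [S]
lemma S1_apply' (x : ℝ) : S 1 x = x / 5 + 2/5 := by norm_num [S]
lemma S2_apply' (x : ℝ) : S 2 x = x / 5 + 4/5 := by norm_num [S]

lemma comb_integral' {P : Measure ℝ} [IsFiniteMeasure P] (a b c₂ c₁ c₀ : ℝ)
    (ha : 0 ≤ a) (hb : b ≤ 1) :
    ∫ x, comb c₂ c₁ c₀ a b x ∂P =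
      c₂ * ∫ x, ind a b 2 x ∂P + c₁ * ∫ x, ind a b 1 x ∂P + c₀ * ∫ x, ind a b 0 x ∂P :=
  comb_integral ha hb c₂ c₁ c₀

set_option maxHeartbeats 1000000 in
theorem stmt5 (P : Measure ℝ) [IsProbabilityMeasure P] (hP : IsTriadicCantor P) :
    (P (Set.Icc (0 : ℝ) (1 / 2))).toReal⁻¹ * ∫ x in Set.Icc (0 : ℝ) (1 / 2), x ∂P = 3 / 14 ∧
    (P (Set.Icc (1 / 2 : ℝ) 1)).toReal⁻¹ * ∫ x in Set.Icc (1 / 2 : ℝ) 1, x ∂P = 11 / 14 ∧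
    distortion P {(3 / 14 : ℝ), 11 / 14} = 13 / 441 ∧
    quantErr P 2 < distortion P {(3 / 14 : ℝ), 11 / 14} := by
  have hsupp := supp_ae hP
  have hicc : P (Set.Icc (0:ℝ) 1) = 1 := (mem_ae_iff_prob_eq_one measurableSet_Icc).mp hsupp
  have hF0 : ∫ x, ind 0 1 0 x ∂P = 1 := by
    rw [ind_zero_integral, hicc]; norm_num
  have hF1 : ∫ x, ind 0 1 1 x ∂P = 1/2 := by
    have e : ∫ x, ind 0 1 1 x ∂P = 3⁻¹ * ((∫ x, (comb 0 (1/5) 0 0 1) x ∂P) + (∫ x, (comb 0 (1/5) (2/5) 0 1) x ∂P) + (∫ x, (comb 0 (1/5) (4/5) 0 1) x ∂P)) := by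
      refine key hP hsupp _ _ _ _ (ind_meas _ _ _) (ind_bd (a := 0) (b := 1) (by norm_num) (by norm_num) 1) ?_ ?_ ?_
      · intro x hx
        obtain ⟨hx0, hx1⟩ := hx
        rw [S0_apply']
        exact ind_comp x (by simp only [Set.mem_Icc]; constructor <;> rintro ⟨h1, h2⟩ <;> constructor <;> linarith) (by ring)
      · intro x hx
        obtain ⟨hx0, hx1⟩ := hx
        rw [S1_apply']
        exact ind_comp x (by simp only [Set.mem_Icc]; constructor <;> rintro ⟨h1, h2⟩ <;> constructor <;> linarith) (by ring)
      · intro x hx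
        obtain ⟨hx0, hx1⟩ := hx
        rw [S2_apply']
        exact ind_comp x (by simp only [Set.mem_Icc]; constructor <;> rintro ⟨h1, h2⟩ <;> constructor <;> linarith) (by ring)
    rw [comb_integral' 0 1 0 (1/5) 0 (by norm_num) (by norm_num), comb_integral' 0 1 0 (1/5) (2/5) (by norm_num) (by norm_num), comb_integral' 0 1 0 (1/5) (4/5) (by norm_num) (by norm_num)] at e
    linarith [hF0, e]
  have hF2 : ∫ x, ind 0 1 2 x ∂P = 13/36 := by
    have e : ∫ x, ind 0 1 2 x ∂P = 3⁻¹ * ((∫ x, (comb (1/25) 0 0 0 1) x ∂P) + (∫ x, (comb (1/25) (4/25) (4/25) 0 1) x ∂P) + (∫ x, (comb (1/25) (8/25) (16/25) 0 1) x ∂P)) := by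
      refine key hP hsupp _ _ _ _ (ind_meas _ _ _) (ind_bd (a := 0) (b := 1) (by norm_num) (by norm_num) 2) ?_ ?_ ?_
      · intro x hx
        obtain ⟨hx0, hx1⟩ := hx
        rw [S0_apply']
        exact ind_comp x (by simp only [Set.mem_Icc]; constructor <;> rintro ⟨h1, h2⟩ <;> constructor <;> linarith) (by ring)
      · intro x hx
        obtain ⟨hx0, hx1⟩ := hx
        rw [S1_apply']
        exact ind_comp x (by simp only [Set.mem_Icc]; constructor <;> rintro ⟨h1, h2⟩ <;> constructor <;> linarith) (by ring)
      · intro x hx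
        obtain ⟨hx0, hx1⟩ := hx
        rw [S2_apply']
        exact ind_comp x (by simp only [Set.mem_Icc]; constructor <;> rintro ⟨h1, h2⟩ <;> constructor <;> linarith) (by ring)
    rw [comb_integral' 0 1 (1/25) 0 0 (by norm_num) (by norm_num), comb_integral' 0 1 (1/25) (4/25) (4/25) (by norm_num) (by norm_num), comb_integral' 0 1 (1/25) (8/25) (16/25) (by norm_num) (by norm_num)] at e
    linarith [hF0, hF1, e]
  have hA0 : ∫ x, ind 0 (1/2) 0 x ∂P = 1/2 := by
    have e : ∫ x, ind 0 (1/2) 0 x ∂P = 3⁻¹ * ((∫ x, (comb 0 0 1 0 1) x ∂P) + (∫ x, (comb 0 0 1 0 (1/2)) x ∂P) + (∫ x, (comb 0 0 0 0 1) x ∂P)) := by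
      refine key hP hsupp _ _ _ _ (ind_meas _ _ _) (ind_bd (a := 0) (b := (1/2)) (by norm_num) (by norm_num) 0) ?_ ?_ ?_
      · intro x hx
        obtain ⟨hx0, hx1⟩ := hx
        rw [S0_apply']
        exact ind_comp x (by simp only [Set.mem_Icc]; constructor <;> rintro ⟨h1, h2⟩ <;> constructor <;> linarith) (by ring)
      · intro x hx
        obtain ⟨hx0, hx1⟩ := hx
        rw [S1_apply']
        exact ind_comp x (by simp only [Set.mem_Icc]; constructor <;> rintro ⟨h1, h2⟩ <;> constructor <;> linarith) (by ring)
      · intro x hx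
        obtain ⟨hx0, hx1⟩ := hx
        rw [S2_apply']
        exact ind_comp_zero _ _ x (by simp only [Set.mem_Icc, not_and_or, not_le]; right; linarith)
    rw [comb_integral' 0 1 0 0 1 (by norm_num) (by norm_num), comb_integral' 0 (1/2) 0 0 1 (by norm_num) (by norm_num), comb_integral' 0 1 0 0 0 (by norm_num) (by norm_num)] at e
    linarith [hF0, e]
  have hA1 : ∫ x, ind 0 (1/2) 1 x ∂P = 3/28 := by
    have e : ∫ x, ind 0 (1/2) 1 x ∂P = 3⁻¹ * ((∫ x, (comb 0 (1/5) 0 0 1) x ∂P) + (∫ x, (comb 0 (1/5) (2/5) 0 (1/2)) x ∂P) + (∫ x, (comb 0 0 0 0 1) x ∂P)) := by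
      refine key hP hsupp _ _ _ _ (ind_meas _ _ _) (ind_bd (a := 0) (b := (1/2)) (by norm_num) (by norm_num) 1) ?_ ?_ ?_
      · intro x hx
        obtain ⟨hx0, hx1⟩ := hx
        rw [S0_apply']
        exact ind_comp x (by simp only [Set.mem_Icc]; constructor <;> rintro ⟨h1, h2⟩ <;> constructor <;> linarith) (by ring)
      · intro x hx
        obtain ⟨hx0, hx1⟩ := hx
        rw [S1_apply']
        exact ind_comp x (by simp only [Set.mem_Icc]; constructor <;> rintro ⟨h1, h2⟩ <;> constructor <;> linarith) (by ring)
      · intro x hx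
        obtain ⟨hx0, hx1⟩ := hx
        rw [S2_apply']
        exact ind_comp_zero _ _ x (by simp only [Set.mem_Icc, not_and_or, not_le]; right; linarith)
    rw [comb_integral' 0 1 0 (1/5) 0 (by norm_num) (by norm_num), comb_integral' 0 (1/2) 0 (1/5) (2/5) (by norm_num) (by norm_num), comb_integral' 0 1 0 0 0 (by norm_num) (by norm_num)] at e
    linarith [hF1, hA0, e]
  have hA2 : ∫ x, ind 0 (1/2) 2 x ∂P = 19/504 := by
    have e : ∫ x, ind 0 (1/2) 2 x ∂P = 3⁻¹ * ((∫ x, (comb (1/25) 0 0 0 1) x ∂P) + (∫ x, (comb (1/25) (4/25) (4/25) 0 (1/2)) x ∂P) + (∫ x, (comb 0 0 0 0 1) x ∂P)) := by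
      refine key hP hsupp _ _ _ _ (ind_meas _ _ _) (ind_bd (a := 0) (b := (1/2)) (by norm_num) (by norm_num) 2) ?_ ?_ ?_
      · intro x hx
        obtain ⟨hx0, hx1⟩ := hx
        rw [S0_apply']
        exact ind_comp x (by simp only [Set.mem_Icc]; constructor <;> rintro ⟨h1, h2⟩ <;> constructor <;> linarith) (by ring)
      · intro x hx
        obtain ⟨hx0, hx1⟩ := hx
        rw [S1_apply']
        exact ind_comp x (by simp only [Set.mem_Icc]; constructor <;> rintro ⟨h1, h2⟩ <;> constructor <;> linarith) (by ring)
      · intro x hx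
        obtain ⟨hx0, hx1⟩ := hx
        rw [S2_apply']
        exact ind_comp_zero _ _ x (by simp only [Set.mem_Icc, not_and_or, not_le]; right; linarith)
    rw [comb_integral' 0 1 (1/25) 0 0 (by norm_num) (by norm_num), comb_integral' 0 (1/2) (1/25) (4/25) (4/25) (by norm_num) (by norm_num), comb_integral' 0 1 0 0 0 (by norm_num) (by norm_num)] at e
    linarith [hF2, hA1, hA0, e]
  have hB0 : ∫ x, ind (1/2) 1 0 x ∂P = 1/2 := by
    have e : ∫ x, ind (1/2) 1 0 x ∂P = 3⁻¹ * ((∫ x, (comb 0 0 0 0 1) x ∂P) + (∫ x, (comb 0 0 1 (1/2) 1) x ∂P) + (∫ x, (comb 0 0 1 0 1) x ∂P)) := by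
      refine key hP hsupp _ _ _ _ (ind_meas _ _ _) (ind_bd (a := (1/2)) (b := 1) (by norm_num) (by norm_num) 0) ?_ ?_ ?_
      · intro x hx
        obtain ⟨hx0, hx1⟩ := hx
        rw [S0_apply']
        exact ind_comp_zero _ _ x (by simp only [Set.mem_Icc, not_and_or, not_le]; left; linarith)
      · intro x hx
        obtain ⟨hx0, hx1⟩ := hx
        rw [S1_apply']
        exact ind_comp x (by simp only [Set.mem_Icc]; constructor <;> rintro ⟨h1, h2⟩ <;> constructor <;> linarith) (by ring)
      · intro x hx
        obtain ⟨hx0, hx1⟩ := hx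
        rw [S2_apply']
        exact ind_comp x (by simp only [Set.mem_Icc]; constructor <;> rintro ⟨h1, h2⟩ <;> constructor <;> linarith) (by ring)
    rw [comb_integral' 0 1 0 0 0 (by norm_num) (by norm_num), comb_integral' (1/2) 1 0 0 1 (by norm_num) (by norm_num), comb_integral' 0 1 0 0 1 (by norm_num) (by norm_num)] at e
    linarith [hF0, e]
  have hB1 : ∫ x, ind (1/2) 1 1 x ∂P = 11/28 := by
    have e : ∫ x, ind (1/2) 1 1 x ∂P = 3⁻¹ * ((∫ x, (comb 0 0 0 0 1) x ∂P) + (∫ x, (comb 0 (1/5) (2/5) (1/2) 1) x ∂P) + (∫ x, (comb 0 (1/5) (4/5) 0 1) x ∂P)) := by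
      refine key hP hsupp _ _ _ _ (ind_meas _ _ _) (ind_bd (a := (1/2)) (b := 1) (by norm_num) (by norm_num) 1) ?_ ?_ ?_
      · intro x hx
        obtain ⟨hx0, hx1⟩ := hx
        rw [S0_apply']
        exact ind_comp_zero _ _ x (by simp only [Set.mem_Icc, not_and_or, not_le]; left; linarith)
      · intro x hx
        obtain ⟨hx0, hx1⟩ := hx
        rw [S1_apply']
        exact ind_comp x (by simp only [Set.mem_Icc]; constructor <;> rintro ⟨h1, h2⟩ <;> constructor <;> linarith) (by ring)
      · intro x hx
        obtain ⟨hx0, hx1⟩ := hx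
        rw [S2_apply']
        exact ind_comp x (by simp only [Set.mem_Icc]; constructor <;> rintro ⟨h1, h2⟩ <;> constructor <;> linarith) (by ring)
    rw [comb_integral' 0 1 0 0 0 (by norm_num) (by norm_num), comb_integral' (1/2) 1 0 (1/5) (2/5) (by norm_num) (by norm_num), comb_integral' 0 1 0 (1/5) (4/5) (by norm_num) (by norm_num)] at e
    linarith [hF1, hF0, hB0, e]
  have hB2 : ∫ x, ind (1/2) 1 2 x ∂P = 163/504 := by
    have e : ∫ x, ind (1/2) 1 2 x ∂P = 3⁻¹ * ((∫ x, (comb 0 0 0 0 1) x ∂P) + (∫ x, (comb (1/25) (4/25) (4/25) (1/2) 1) x ∂P) + (∫ x, (comb (1/25) (8/25) (16/25) 0 1) x ∂P)) := by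
      refine key hP hsupp _ _ _ _ (ind_meas _ _ _) (ind_bd (a := (1/2)) (b := 1) (by norm_num) (by norm_num) 2) ?_ ?_ ?_
      · intro x hx
        obtain ⟨hx0, hx1⟩ := hx
        rw [S0_apply']
        exact ind_comp_zero _ _ x (by simp only [Set.mem_Icc, not_and_or, not_le]; left; linarith)
      · intro x hx
        obtain ⟨hx0, hx1⟩ := hx
        rw [S1_apply']
        exact ind_comp x (by simp only [Set.mem_Icc]; constructor <;> rintro ⟨h1, h2⟩ <;> constructor <;> linarith) (by ring)
      · intro x hx
        obtain ⟨hx0, hx1⟩ := hx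
        rw [S2_apply']
        exact ind_comp x (by simp only [Set.mem_Icc]; constructor <;> rintro ⟨h1, h2⟩ <;> constructor <;> linarith) (by ring)
    rw [comb_integral' 0 1 0 0 0 (by norm_num) (by norm_num), comb_integral' (1/2) 1 (1/25) (4/25) (4/25) (by norm_num) (by norm_num), comb_integral' 0 1 (1/25) (8/25) (16/25) (by norm_num) (by norm_num)] at e
    linarith [hF2, hF1, hF0, hB1, hB0, e]
  have hM0 : ∫ x, ind 0 (17/50) 0 x ∂P = 1/3 := by
    have e : ∫ x, ind 0 (17/50) 0 x ∂P = 3⁻¹ * ((∫ x, (comb 0 0 1 0 1) x ∂P) + (∫ x, (comb 0 0 0 0 1) x ∂P) + (∫ x, (comb 0 0 0 0 1) x ∂P)) := by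
      refine key hP hsupp _ _ _ _ (ind_meas _ _ _) (ind_bd (a := 0) (b := (17/50)) (by norm_num) (by norm_num) 0) ?_ ?_ ?_
      · intro x hx
        obtain ⟨hx0, hx1⟩ := hx
        rw [S0_apply']
        exact ind_comp x (by simp only [Set.mem_Icc]; constructor <;> rintro ⟨h1, h2⟩ <;> constructor <;> linarith) (by ring)
      · intro x hx
        obtain ⟨hx0, hx1⟩ := hx
        rw [S1_apply']
        exact ind_comp_zero _ _ x (by simp only [Set.mem_Icc, not_and_or, not_le]; right; linarith)
      · intro x hx
        obtain ⟨hx0, hx1⟩ := hx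
        rw [S2_apply']
        exact ind_comp_zero _ _ x (by simp only [Set.mem_Icc, not_and_or, not_le]; right; linarith)
    rw [comb_integral' 0 1 0 0 1 (by norm_num) (by norm_num), comb_integral' 0 1 0 0 0 (by norm_num) (by norm_num)] at e
    linarith [hF0, e]
  have hM1 : ∫ x, ind 0 (17/50) 1 x ∂P = 1/30 := by
    have e : ∫ x, ind 0 (17/50) 1 x ∂P = 3⁻¹ * ((∫ x, (comb 0 (1/5) 0 0 1) x ∂P) + (∫ x, (comb 0 0 0 0 1) x ∂P) + (∫ x, (comb 0 0 0 0 1) x ∂P)) := by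
      refine key hP hsupp _ _ _ _ (ind_meas _ _ _) (ind_bd (a := 0) (b := (17/50)) (by norm_num) (by norm_num) 1) ?_ ?_ ?_
      · intro x hx
        obtain ⟨hx0, hx1⟩ := hx
        rw [S0_apply']
        exact ind_comp x (by simp only [Set.mem_Icc]; constructor <;> rintro ⟨h1, h2⟩ <;> constructor <;> linarith) (by ring)
      · intro x hx
        obtain ⟨hx0, hx1⟩ := hx
        rw [S1_apply']
        exact ind_comp_zero _ _ x (by simp only [Set.mem_Icc, not_and_or, not_le]; right; linarith)
      · intro x hx
        obtain ⟨hx0, hx1⟩ := hx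
        rw [S2_apply']
        exact ind_comp_zero _ _ x (by simp only [Set.mem_Icc, not_and_or, not_le]; right; linarith)
    rw [comb_integral' 0 1 0 (1/5) 0 (by norm_num) (by norm_num), comb_integral' 0 1 0 0 0 (by norm_num) (by norm_num)] at e
    linarith [hF1, e]
  have hM2 : ∫ x, ind 0 (17/50) 2 x ∂P = 13/2700 := by
    have e : ∫ x, ind 0 (17/50) 2 x ∂P = 3⁻¹ * ((∫ x, (comb (1/25) 0 0 0 1) x ∂P) + (∫ x, (comb 0 0 0 0 1) x ∂P) + (∫ x, (comb 0 0 0 0 1) x ∂P)) := by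
      refine key hP hsupp _ _ _ _ (ind_meas _ _ _) (ind_bd (a := 0) (b := (17/50)) (by norm_num) (by norm_num) 2) ?_ ?_ ?_
      · intro x hx
        obtain ⟨hx0, hx1⟩ := hx
        rw [S0_apply']
        exact ind_comp x (by simp only [Set.mem_Icc]; constructor <;> rintro ⟨h1, h2⟩ <;> constructor <;> linarith) (by ring)
      · intro x hx
        obtain ⟨hx0, hx1⟩ := hx
        rw [S1_apply']
        exact ind_comp_zero _ _ x (by simp only [Set.mem_Icc, not_and_or, not_le]; right; linarith)
      · intro x hx
        obtain ⟨hx0, hx1⟩ := hx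
        rw [S2_apply']
        exact ind_comp_zero _ _ x (by simp only [Set.mem_Icc, not_and_or, not_le]; right; linarith)
    rw [comb_integral' 0 1 (1/25) 0 0 (by norm_num) (by norm_num), comb_integral' 0 1 0 0 0 (by norm_num) (by norm_num)] at e
    linarith [hF2, e]
  have hL0 : ∫ x, ind 0 (117/250) 0 x ∂P = 4/9 := by
    have e : ∫ x, ind 0 (117/250) 0 x ∂P = 3⁻¹ * ((∫ x, (comb 0 0 1 0 1) x ∂P) + (∫ x, (comb 0 0 1 0 (17/50)) x ∂P) + (∫ x, (comb 0 0 0 0 1) x ∂P)) := by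
      refine key hP hsupp _ _ _ _ (ind_meas _ _ _) (ind_bd (a := 0) (b := (117/250)) (by norm_num) (by norm_num) 0) ?_ ?_ ?_
      · intro x hx
        obtain ⟨hx0, hx1⟩ := hx
        rw [S0_apply']
        exact ind_comp x (by simp only [Set.mem_Icc]; constructor <;> rintro ⟨h1, h2⟩ <;> constructor <;> linarith) (by ring)
      · intro x hx
        obtain ⟨hx0, hx1⟩ := hx
        rw [S1_apply']
        exact ind_comp x (by simp only [Set.mem_Icc]; constructor <;> rintro ⟨h1, h2⟩ <;> constructor <;> linarith) (by ring)
      · intro x hx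
        obtain ⟨hx0, hx1⟩ := hx
        rw [S2_apply']
        exact ind_comp_zero _ _ x (by simp only [Set.mem_Icc, not_and_or, not_le]; right; linarith)
    rw [comb_integral' 0 1 0 0 1 (by norm_num) (by norm_num), comb_integral' 0 (17/50) 0 0 1 (by norm_num) (by norm_num), comb_integral' 0 1 0 0 0 (by norm_num) (by norm_num)] at e
    linarith [hF0, hM0, e]
  have hL1 : ∫ x, ind 0 (117/250) 1 x ∂P = 2/25 := by
    have e : ∫ x, ind 0 (117/250) 1 x ∂P = 3⁻¹ * ((∫ x, (comb 0 (1/5) 0 0 1) x ∂P) + (∫ x, (comb 0 (1/5) (2/5) 0 (17/50)) x ∂P) + (∫ x, (comb 0 0 0 0 1) x ∂P)) := by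
      refine key hP hsupp _ _ _ _ (ind_meas _ _ _) (ind_bd (a := 0) (b := (117/250)) (by norm_num) (by norm_num) 1) ?_ ?_ ?_
      · intro x hx
        obtain ⟨hx0, hx1⟩ := hx
        rw [S0_apply']
        exact ind_comp x (by simp only [Set.mem_Icc]; constructor <;> rintro ⟨h1, h2⟩ <;> constructor <;> linarith) (by ring)
      · intro x hx
        obtain ⟨hx0, hx1⟩ := hx
        rw [S1_apply']
        exact ind_comp x (by simp only [Set.mem_Icc]; constructor <;> rintro ⟨h1, h2⟩ <;> constructor <;> linarith) (by ring)
      · intro x hx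
        obtain ⟨hx0, hx1⟩ := hx
        rw [S2_apply']
        exact ind_comp_zero _ _ x (by simp only [Set.mem_Icc, not_and_or, not_le]; right; linarith)
    rw [comb_integral' 0 1 0 (1/5) 0 (by norm_num) (by norm_num), comb_integral' 0 (17/50) 0 (1/5) (2/5) (by norm_num) (by norm_num), comb_integral' 0 1 0 0 0 (by norm_num) (by norm_num)] at e
    linarith [hF1, hM1, hM0, e]
  have hL2 : ∫ x, ind 0 (117/250) 2 x ∂P = 1237/50625 := by
    have e : ∫ x, ind 0 (117/250) 2 x ∂P = 3⁻¹ * ((∫ x, (comb (1/25) 0 0 0 1) x ∂P) + (∫ x, (comb (1/25) (4/25) (4/25) 0 (17/50)) x ∂P) + (∫ x, (comb 0 0 0 0 1) x ∂P)) := by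
      refine key hP hsupp _ _ _ _ (ind_meas _ _ _) (ind_bd (a := 0) (b := (117/250)) (by norm_num) (by norm_num) 2) ?_ ?_ ?_
      · intro x hx
        obtain ⟨hx0, hx1⟩ := hx
        rw [S0_apply']
        exact ind_comp x (by simp only [Set.mem_Icc]; constructor <;> rintro ⟨h1, h2⟩ <;> constructor <;> linarith) (by ring)
      · intro x hx
        obtain ⟨hx0, hx1⟩ := hx
        rw [S1_apply']
        exact ind_comp x (by simp only [Set.mem_Icc]; constructor <;> rintro ⟨h1, h2⟩ <;> constructor <;> linarith) (by ring)
      · intro x hx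
        obtain ⟨hx0, hx1⟩ := hx
        rw [S2_apply']
        exact ind_comp_zero _ _ x (by simp only [Set.mem_Icc, not_and_or, not_le]; right; linarith)
    rw [comb_integral' 0 1 (1/25) 0 0 (by norm_num) (by norm_num), comb_integral' 0 (17/50) (1/25) (4/25) (4/25) (by norm_num) (by norm_num), comb_integral' 0 1 0 0 0 (by norm_num) (by norm_num)] at e
    linarith [hF2, hM2, hM1, hM0, e]
  have hPA : (P (Set.Icc (0:ℝ) (1/2))).toReal = 1/2 := by
    rw [← ind_zero_integral]; exact hA0
  have hIA : ∫ x in Set.Icc (0:ℝ) (1/2), x ∂P = 3/28 := by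
    rw [← ind_one_integral]; exact hA1
  have hPB : (P (Set.Icc (1/2:ℝ) 1)).toReal = 1/2 := by
    rw [← ind_zero_integral]; exact hB0
  have hIB : ∫ x in Set.Icc (1/2:ℝ) 1, x ∂P = 11/28 := by
    rw [← ind_one_integral]; exact hB1
  have hVγ := distortion_pair_eq (P := P) hsupp (c := 3/14) (d := 11/14)
    (by norm_num) (by norm_num) (by norm_num)
  rw [show ((3:ℝ)/14 + 11/14)/2 = 1/2 by norm_num] at hVγ
  rw [hF2, hF1, hF0, hA2, hA1, hA0] at hVγ
  have hVγ' : distortion P {(3/14:ℝ), 11/14} = 13/441 := by rw [hVγ]; norm_num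
  have hVβ := distortion_pair_eq (P := P) hsupp (c := 9/50) (d := 189/250)
    (by norm_num) (by norm_num) (by norm_num)
  rw [show ((9:ℝ)/50 + 189/250)/2 = 117/250 by norm_num] at hVβ
  rw [hF2, hF1, hF0, hL2, hL1, hL0] at hVβ
  have hVβ' : distortion P {(9/50:ℝ), 189/250} = 821/28125 := by rw [hVβ]; norm_num
  have hbdd : BddBelow {e | ∃ α : Set ℝ, α.Finite ∧ α.Nonempty ∧ α.ncard ≤ 2 ∧ distortion P α = e} := by
    refine ⟨0, fun e he => ?_⟩
    obtain ⟨α, hfin, hne, hcard, hdist⟩ := he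
    rw [← hdist]
    exact integral_nonneg fun x => Real.iInf_nonneg fun a => sq_nonneg _
  have hmem : (821/28125:ℝ) ∈ {e | ∃ α : Set ℝ, α.Finite ∧ α.Nonempty ∧ α.ncard ≤ 2 ∧ distortion P α = e} :=
    ⟨{9/50, 189/250}, Set.toFinite _, ⟨9/50, Set.mem_insert _ _⟩,
      le_of_eq (Set.ncard_pair (by norm_num)), hVβ'⟩
  have hqe : quantErr P 2 ≤ 821/28125 := by
    unfold quantErr
    exact csInf_le hbdd hmem
  refine ⟨by rw [hPA, hIA]; norm_num, by rw [hPB, hIB]; norm_num, hVγ', ?_⟩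
  rw [hVγ']
  calc quantErr P 2 ≤ 821/28125 := hqe
    _ < 13/441 := by norm_num
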